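/- Let n ≥ 1 and G = ℍⁿ = {x ∈ ℝⁿ : xₙ > 0} be the upper half-space. For all x, y ∈ G, s_G(x,y) = |x − y| / |x − y'|, where y' = (y₁, …, y_{n−1}, −yₙ) is the reflection of y in ∂ℍⁿ; that is, the supremum sup_{z ∈ ∂ℍⁿ} |x−y|/(|z−x|+|z−y|) equals |x−y|/|x−y'|. -/
import Mathlib


/-- The triangular ratio metric `s_G(x,y) = sup_{z ∈ ∂G} |x−y|/(|z−x|+|z−y|)`. -/
noncomputable def sMetric {n : ℕ} (G : Set (EuclideanSpace ℝ (Fin n)))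
    (x y : EuclideanSpace ℝ (Fin n)) : ℝ :=
  ⨆ z ∈ frontier G, dist x y / (dist z x + dist z y)

/-- Let n ≥ 1 and G = ℍⁿ = {x ∈ ℝⁿ : xₙ > 0} be the upper half-space. For all x, y ∈ G,
s_G(x,y) = |x − y| / |x − y'|, where y' = (y₁, …, y_{n−1}, −yₙ) is the reflection of y
in ∂ℍⁿ. -/
theorem sMetric_halfSpace_eq (n : ℕ) (hn : 1 ≤ n) (i : Fin n) (hi : (i : ℕ) = n - 1)
    (x y : EuclideanSpace ℝ (Fin n)) (hx : 0 < x i) (hy : 0 < y i)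
    (y' : EuclideanSpace ℝ (Fin n)) (hy'₁ : ∀ j, j ≠ i → y' j = y j)
    (hy'₂ : y' i = -(y i)) :
    sMetric {w : EuclideanSpace ℝ (Fin n) | 0 < w i} x y = dist x y / dist x y' := by
  classical
  -- the frontier is the hyperplane {w | w i = 0}
  set L : EuclideanSpace ℝ (Fin n) →L[ℝ] ℝ := EuclideanSpace.proj i with hL
  have hLsurj : Function.Surjective L := by
    intro c
    exact ⟨EuclideanSpace.single i c, by simp [hL]⟩
  have hfr : frontier {w : EuclideanSpace ℝ (Fin n) | 0 < w i}
      = {w : EuclideanSpace ℝ (Fin n) | w i = 0} := by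
    have h1 : {w : EuclideanSpace ℝ (Fin n) | 0 < w i} = L ⁻¹' Set.Ioi 0 := by
      ext w; simp [hL]
    rw [h1, L.frontier_preimage hLsurj, frontier_Ioi]
    ext w; simp [hL]
  -- reflection symmetry: distances to y and y' agree on the hyperplane
  have hrefl : ∀ z : EuclideanSpace ℝ (Fin n), z i = 0 → dist z y = dist z y' := by
    intro z hz
    rw [EuclideanSpace.dist_eq, EuclideanSpace.dist_eq]
    congr 1
    refine Finset.sum_congr rfl fun j _ => ?_
    by_cases hji : j = i
    · subst hji
      rw [hz, hy'₂]
      simp [Real.dist_eq]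
    · rw [hy'₁ j hji]
  have hxy' : 0 < dist x y' := by
    rw [dist_pos]
    intro h
    have : x i = y' i := by rw [h]
    rw [hy'₂] at this
    linarith
  set M : ℝ := dist x y / dist x y' with hM
  have hM0 : 0 ≤ M := div_nonneg dist_nonneg hxy'.le
  -- upper bound for each z on the hyperplane
  have hub : ∀ z : EuclideanSpace ℝ (Fin n), z i = 0 →
      dist x y / (dist z x + dist z y) ≤ M := by
    intro z hz
    rw [hM]
    have htri : dist x y' ≤ dist z x + dist z y := by
      rw [hrefl z hz]
      calc dist x y' ≤ dist x z + dist z y' := dist_triangle _ _ _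
        _ = dist z x + dist z y' := by rw [dist_comm x z]
    exact div_le_div_of_nonneg_left dist_nonneg hxy' htri
  -- the optimal point z₀
  set t : ℝ := x i / (x i + y i) with ht
  have hden : 0 < x i + y i := by linarith
  have ht0 : 0 < t := div_pos hx hden
  have ht1 : t < 1 := (div_lt_one hden).2 (by linarith)
  set z₀ : EuclideanSpace ℝ (Fin n) := x + t • (y' - x) with hz₀
  have hz₀i : z₀ i = 0 := by
    have : z₀ i = x i + t * (y' i - x i) := by
      rw [hz₀]; simp
    rw [this, hy'₂, ht]
    field_simp
    ring
  have hdsum : dist z₀ x + dist z₀ y' = dist x y' := by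
    have hv : dist x y' = ‖y' - x‖ := by rw [dist_eq_norm, norm_sub_rev]
    have h1 : dist z₀ x = t * ‖y' - x‖ := by
      rw [dist_comm, hz₀, dist_self_add_right, norm_smul, Real.norm_eq_abs,
        abs_of_pos ht0]
    have h2 : dist z₀ y' = (1 - t) * ‖y' - x‖ := by
      have hy'eq : y' = x + (y' - x) := by abel
      calc dist z₀ y' = dist (x + t • (y' - x)) (x + (y' - x)) := by
            rw [hz₀, ← hy'eq]
        _ = dist (t • (y' - x)) (y' - x) := dist_add_left _ _ _
        _ = ‖t • (y' - x) - (y' - x)‖ := dist_eq_norm _ _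
        _ = ‖(t - 1) • (y' - x)‖ := by rw [sub_smul, one_smul]
        _ = |t - 1| * ‖y' - x‖ := by rw [norm_smul, Real.norm_eq_abs]
        _ = (1 - t) * ‖y' - x‖ := by rw [abs_of_neg (by linarith), neg_sub]
    rw [h1, h2, hv]; ring
  have hval : dist x y / (dist z₀ x + dist z₀ y) = M := by
    rw [hrefl z₀ hz₀i, hdsum, hM]
  -- compute the supremum
  rw [sMetric, hfr]
  have hbdd : BddAbove (Set.range fun z : EuclideanSpace ℝ (Fin n) =>
      ⨆ _ : z ∈ {w : EuclideanSpace ℝ (Fin n) | w i = 0},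
        dist x y / (dist z x + dist z y)) := by
    refine ⟨M, ?_⟩
    rintro _ ⟨z, rfl⟩
    exact Real.iSup_le (fun hz => hub z hz) hM0
  refine le_antisymm ?_ ?_
  · exact Real.iSup_le (fun z => Real.iSup_le (fun hz => hub z hz) hM0) hM0
  · calc M = dist x y / (dist z₀ x + dist z₀ y) := hval.symm
      _ = ⨆ _ : z₀ ∈ {w : EuclideanSpace ℝ (Fin n) | w i = 0},
            dist x y / (dist z₀ x + dist z₀ y) := by
              rw [ciSup_pos (show z₀ ∈ {w : EuclideanSpace ℝ (Fin n) | w i = 0} from hz₀i)]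
      _ ≤ _ := le_ciSup hbdd z₀
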